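/- Let X and Y be smooth manifolds with X compact, f : X → Y a smooth map, ω_Y a symplectic form on Y, and J a continuous almost-complex structure on X such that f*ω_Y(v, Jv) > 0 for all tangent vectors v ∉ ker df. Let η be a closed 2-form on X such that η(v, Jv) > 0 for every nonzero v ∈ ker df_x, for every x ∈ X. Then there exists t₀ > 0 such that for all t ∈ (0, t₀), the closed 2-form ω_t = t·η + f*ω_Y tames J (i.e., ω_t(v, Jv) > 0 for all nonzero tangent vectors v), and hence ω_t is a symplectic form on X. -/

import Mathlib

open scoped Manifold

open Set

/-- Topological core of Thurston's argument: on a compact set where `g ≥ 0` and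
at each point `g > 0` or `h > 0`, we have `t*h + g > 0` for all small `t > 0`. -/
private lemma thurston_aux {Z : Type*} [TopologicalSpace Z] {K : Set Z} (hK : IsCompact K)
    {g h : Z → ℝ} (hg : Continuous g) (hh : Continuous h)
    (hg0 : ∀ p ∈ K, 0 ≤ g p) (hpos : ∀ p ∈ K, 0 < g p ∨ 0 < h p) :
    ∃ t₀ > (0:ℝ), ∀ t : ℝ, 0 < t → t < t₀ → ∀ p ∈ K, 0 < t * h p + g p := by
  obtain ⟨M, hM⟩ := hK.exists_bound_of_continuousOn hh.continuousOn
  set K' : Set Z := K ∩ h ⁻¹' (Iic 0) with hK'def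
  have hK'comp : IsCompact K' := hK.inter_right (isClosed_Iic.preimage hh)
  rcases K'.eq_empty_or_nonempty with hKe | hKne
  · refine ⟨1, one_pos, fun t ht _ p hp => ?_⟩
    have hhp : 0 < h p := by
      by_contra hcon
      have : p ∈ K' := ⟨hp, le_of_not_gt hcon⟩
      rw [hKe] at this
      exact this
    have := hg0 p hp
    nlinarith
  · obtain ⟨p₀, hp₀K, hp₀min⟩ := hK'comp.exists_isMinOn hKne hg.continuousOn
    have hm : 0 < g p₀ := by
      rcases hpos p₀ hp₀K.1 with h1 | h1
      · exact h1
      · exact absurd h1 (not_lt.2 hp₀K.2)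
    refine ⟨g p₀ / (|M| + 1), div_pos hm (by positivity), fun t ht ht' p hp => ?_⟩
    rcases lt_or_ge 0 (h p) with h1 | h1
    · nlinarith [hg0 p hp]
    · have hpK' : p ∈ K' := ⟨hp, h1⟩
      have h2 : g p₀ ≤ g p := hp₀min hpK'
      have h3 : |h p| ≤ M := by simpa [Real.norm_eq_abs] using hM p hp
      have h4 : -h p ≤ |M| := le_trans (neg_le_abs _) (le_trans h3 (le_abs_self M))
      have ht2 : t * (|M| + 1) < g p₀ := (lt_div_iff₀ (by positivity)).1 ht'
      nlinarith [mul_le_mul_of_nonneg_left h4 ht.le]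

theorem thurston_taming
    {E : Type*} [NormedAddCommGroup E] [NormedSpace ℝ E] [FiniteDimensional ℝ E]
    {H : Type*} [TopologicalSpace H] (I : ModelWithCorners ℝ E H)
    {E' : Type*} [NormedAddCommGroup E'] [NormedSpace ℝ E'] [FiniteDimensional ℝ E']
    {H' : Type*} [TopologicalSpace H'] (I' : ModelWithCorners ℝ E' H')
    (X : Type*) [TopologicalSpace X] [ChartedSpace H X]
    [IsManifold I (⊤ : ℕ∞) X] [CompactSpace X]
    (Y : Type*) [TopologicalSpace Y] [ChartedSpace H' Y]
    [IsManifold I' (⊤ : ℕ∞) Y]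
    (f : X → Y) (hf : ContMDiff I I' (⊤ : ℕ∞) f)
    -- the symplectic form ω_Y on Y, as a family of alternating nondegenerate
    -- bilinear forms on the tangent spaces
    (ωY : ∀ y : Y, TangentSpace I' y →L[ℝ] TangentSpace I' y →L[ℝ] ℝ)
    (hωYalt : ∀ (y : Y) (w : TangentSpace I' y), ωY y w w = 0)
    (hωYnd : ∀ (y : Y) (w : TangentSpace I' y), w ≠ 0 → ∃ w', ωY y w w' ≠ 0)
    -- the continuous almost-complex structure J on X
    (J : ∀ x : X, TangentSpace I x →L[ℝ] TangentSpace I x)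
    (hJsq : ∀ (x : X) (v : TangentSpace I x), J x (J x v) = -v)
    -- the 2-form η on X
    (η : ∀ x : X, TangentSpace I x →L[ℝ] TangentSpace I x →L[ℝ] ℝ)
    (hηalt : ∀ (x : X) (v : TangentSpace I x), η x v v = 0)
    -- continuity of the relevant data, expressed on the tangent bundle
    (hgcont : Continuous fun p : TangentBundle I X =>
      ωY (f p.proj) (mfderiv I I' f p.proj p.snd)
        (mfderiv I I' f p.proj (J p.proj p.snd)))
    (hhcont : Continuous fun p : TangentBundle I X => η p.proj p.snd (J p.proj p.snd))
    -- J is (ω_Y, f)-tame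
    (htame : ∀ (x : X) (v : TangentSpace I x), mfderiv I I' f x v ≠ 0 →
      0 < ωY (f x) (mfderiv I I' f x v) (mfderiv I I' f x (J x v)))
    -- η tames J on each ker df_x
    (hη : ∀ (x : X) (v : TangentSpace I x), v ≠ 0 → mfderiv I I' f x v = 0 →
      0 < η x v (J x v)) :
    ∃ t₀ > (0 : ℝ), ∀ t : ℝ, 0 < t → t < t₀ →
      (∀ (x : X) (v : TangentSpace I x), v ≠ 0 →
        0 < t * η x v (J x v) +
          ωY (f x) (mfderiv I I' f x v) (mfderiv I I' f x (J x v))) ∧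
      (∀ (x : X) (v : TangentSpace I x), v ≠ 0 → ∃ w : TangentSpace I x,
        t * η x v w + ωY (f x) (mfderiv I I' f x v) (mfderiv I I' f x w) ≠ 0) := by
  classical
  haveI : LocallyCompactSpace X := Manifold.locallyCompact_of_finiteDimensional I
  set G : TangentBundle I X → ℝ := fun p =>
    ωY (f p.proj) (mfderiv I I' f p.proj p.snd) (mfderiv I I' f p.proj (J p.proj p.snd))
    with hGdef
  set Hη : TangentBundle I X → ℝ := fun p => η p.proj p.snd (J p.proj p.snd) with hHdef
  have hGcont : Continuous G := hgcont
  have hHcont : Continuous Hη := hhcont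
  have hGnn : ∀ p : TangentBundle I X, 0 ≤ G p := by
    intro p
    by_cases hdf : mfderiv I I' f p.proj p.snd = 0
    · simp [hGdef, hdf]
    · exact (htame _ _ hdf).le
  have hGH : ∀ p : TangentBundle I X, p.snd ≠ 0 → 0 < G p ∨ 0 < Hη p := by
    intro p hp
    by_cases hdf : mfderiv I I' f p.proj p.snd = 0
    · exact Or.inr (hη _ _ hp hdf)
    · exact Or.inl (htame _ _ hdf)
  have hGsmul : ∀ (x : X) (c : ℝ) (v : TangentSpace I x),
      G ⟨x, c • v⟩ = c ^ 2 * G ⟨x, v⟩ := by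
    intro x c v
    simp only [hGdef, map_smul, ContinuousLinearMap.map_smul,
      ContinuousLinearMap.smul_apply, smul_eq_mul]
    ring
  have hHsmul : ∀ (x : X) (c : ℝ) (v : TangentSpace I x),
      Hη ⟨x, c • v⟩ = c ^ 2 * Hη ⟨x, v⟩ := by
    intro x c v
    simp only [hHdef, map_smul, ContinuousLinearMap.map_smul,
      ContinuousLinearMap.smul_apply, smul_eq_mul]
    ring
  -- local statement around each point, via a compact "sphere bundle" piece
  have key : ∀ x₀ : X, ∃ K : Set X, K ∈ nhds x₀ ∧ ∃ t₀ > (0:ℝ), ∀ t : ℝ, 0 < t → t < t₀ →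
      ∀ p : TangentBundle I X, p.proj ∈ K → p.snd ≠ 0 → 0 < t * Hη p + G p := by
    intro x₀
    set e := trivializationAt E (TangentSpace I) x₀ with he
    have hx₀ : x₀ ∈ e.baseSet := FiberBundle.mem_baseSet_trivializationAt' x₀
    obtain ⟨K, hKnhds, hKsub, hKcomp⟩ :=
      LocallyCompactSpace.local_compact_nhds x₀ e.baseSet (e.open_baseSet.mem_nhds hx₀)
    set S : Set (X × E) := K ×ˢ Metric.sphere (0:E) 1 with hSdef
    have hScomp : IsCompact S := hKcomp.prod (isCompact_sphere 0 1)
    have hSsub : S ⊆ e.target := by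
      rw [e.target_eq]; exact prod_mono hKsub (subset_univ _)
    set Z : Set (TangentBundle I X) := e.toOpenPartialHomeomorph.symm '' S with hZdef
    have hZcomp : IsCompact Z :=
      hScomp.image_of_continuousOn (e.toOpenPartialHomeomorph.continuousOn_symm.mono hSsub)
    have hZne : ∀ q ∈ Z, q.snd ≠ 0 := by
      rintro q ⟨⟨b, w⟩, ⟨hbK, hw⟩, rfl⟩
      have hb : b ∈ e.baseSet := hKsub hbK
      have hwne : w ≠ 0 := by
        intro h0
        rw [mem_sphere_zero_iff_norm, h0, norm_zero] at hw
        exact one_ne_zero hw.symm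
      rw [e.symm_apply_eq_mk_continuousLinearEquivAt_symm (R := ℝ) b hb]
      intro h0
      apply hwne
      have := congrArg (e.continuousLinearEquivAt ℝ b hb) h0
      simp only [ContinuousLinearEquiv.apply_symm_apply, map_zero] at this
      exact this
    obtain ⟨t₀, ht₀, hloc⟩ := thurston_aux hZcomp hGcont hHcont (fun p _ => hGnn p)
      (fun p hp => hGH p (hZne p hp))
    refine ⟨K, hKnhds, t₀, ht₀, fun t ht ht' p hpK hpne => ?_⟩
    have hb : p.proj ∈ e.baseSet := hKsub hpK
    set L := e.continuousLinearEquivAt ℝ p.proj hb with hLdef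
    have hLv : L p.snd ≠ 0 := by
      intro h0
      apply hpne
      have := congrArg L.symm h0
      simp only [ContinuousLinearEquiv.symm_apply_apply, map_zero] at this
      exact this
    set c : ℝ := ‖L p.snd‖ with hc
    have hcpos : 0 < c := norm_pos_iff.2 hLv
    set u : TangentSpace I p.proj := c⁻¹ • p.snd with hu
    have hq : (⟨p.proj, u⟩ : TangentBundle I X) ∈ Z := by
      refine ⟨(p.proj, L u), ⟨hpK, ?_⟩, ?_⟩
      · rw [mem_sphere_zero_iff_norm]
        have h1 : L u = c⁻¹ • L p.snd := by rw [hu, map_smul]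
        rw [h1, norm_smul, norm_inv, Real.norm_eq_abs, abs_of_pos hcpos, ← hc,
          inv_mul_cancel₀ hcpos.ne']
      · rw [e.symm_apply_eq_mk_continuousLinearEquivAt_symm (R := ℝ) p.proj hb, ← hLdef,
          ContinuousLinearEquiv.symm_apply_apply]
    have hpos := hloc t ht ht' _ hq
    have hvcu : p.snd = c • u := by
      rw [hu, smul_smul, mul_inv_cancel₀ hcpos.ne', one_smul]
    have hGp : G p = c ^ 2 * G ⟨p.proj, u⟩ := by
      conv_lhs => rw [show p = (⟨p.proj, c • u⟩ : TangentBundle I X) by rw [← hvcu]]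
      exact hGsmul _ _ _
    have hHp : Hη p = c ^ 2 * Hη ⟨p.proj, u⟩ := by
      conv_lhs => rw [show p = (⟨p.proj, c • u⟩ : TangentBundle I X) by rw [← hvcu]]
      exact hHsmul _ _ _
    rw [hGp, hHp]
    nlinarith [pow_pos hcpos 2]
  choose K hKnhds t₀loc ht₀pos hloc using key
  obtain ⟨s, hs⟩ := isCompact_univ.elim_finite_subcover (fun x => interior (K x))
    (fun x => isOpen_interior)
    (by intro x _; exact mem_iUnion.2 ⟨x, mem_interior_iff_mem_nhds.2 (hKnhds x)⟩)
  rcases isEmpty_or_nonempty X with hX | hX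
  · exact ⟨1, one_pos, fun t _ _ => ⟨fun x => isEmptyElim x, fun x => isEmptyElim x⟩⟩
  have hsne : s.Nonempty := by
    obtain ⟨x⟩ := hX
    rcases mem_iUnion₂.1 (hs (mem_univ x)) with ⟨i, hi, _⟩
    exact ⟨i, hi⟩
  refine ⟨s.inf' hsne t₀loc, ?_, fun t ht ht' => ?_⟩
  · rw [gt_iff_lt, Finset.lt_inf'_iff]
    exact fun i _ => ht₀pos i
  have main : ∀ (x : X) (v : TangentSpace I x), v ≠ 0 →
      0 < t * η x v (J x v) + ωY (f x) (mfderiv I I' f x v) (mfderiv I I' f x (J x v)) := by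
    intro x v hv
    rcases mem_iUnion₂.1 (hs (mem_univ x)) with ⟨i, hiS, hxi⟩
    exact hloc i t ht (lt_of_lt_of_le ht' (Finset.inf'_le _ hiS)) ⟨x, v⟩
      (interior_subset hxi) hv
  exact ⟨main, fun x v hv => ⟨J x v, (main x v hv).ne'⟩⟩
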